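/- For every integer ℓ ≥ 1 and c > 0 with ℓ = ⌈(c/2)^{2/3}⌉ and c√n an integer, the burning number of the fence graph satisfies b(G_{c√n, n}) ≤ 2⌈√(ℓn)⌉ + ℓ − 1. -/
import Mathlib

open SimpleGraph

/-- The set of vertices burned after `t` rounds of the burning process on `G`,
where `s i` is the source of fire chosen in round `i + 1`. -/
def burnSet {V : Type*} (G : SimpleGraph V) (s : ℕ → V) : ℕ → Set V
  | 0 => ∅
  | t + 1 => burnSet G s t ∪ {w | ∃ u ∈ burnSet G s t, G.Adj u w} ∪ {s t}

/-- The partial burning number `b(G, S)`: the least number of rounds needed to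
burn every vertex of `S`. -/
noncomputable def pburn {V : Type*} (G : SimpleGraph V) (S : Set V) : ℕ :=
  sInf {r | ∃ s : ℕ → V, S ⊆ burnSet G s r}

/-- The burning number `b(G)`. -/
noncomputable def burn {V : Type*} (G : SimpleGraph V) : ℕ :=
  pburn G Set.univ

/-- The ball of radius `t` around `v` in graph distance. -/
def gball {V : Type*} (G : SimpleGraph V) (v : V) (t : ℕ) : Set V :=
  {w | G.dist v w ≤ t}

/-- The `m × n` Cartesian grid `P_m □ P_n`; the first coordinate is the height (row). -/
def gridGraph (m n : ℕ) : SimpleGraph (Fin m × Fin n) :=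
  (pathGraph m) □ (pathGraph n)

lemma burnSet_succ_left {V : Type*} (G : SimpleGraph V) (s : ℕ → V) (t : ℕ) :
    burnSet G s t ⊆ burnSet G s (t + 1) := fun _ hv => Or.inl (Or.inl hv)

lemma burnSet_mono {V : Type*} (G : SimpleGraph V) (s : ℕ → V) {t t' : ℕ} (h : t ≤ t') :
    burnSet G s t ⊆ burnSet G s t' := by
  induction t' with
  | zero => cases Nat.le_zero.mp h; exact subset_rfl
  | succ t' ih =>
      rcases Nat.lt_or_ge t (t' + 1) with h' | h'
      · exact (ih (by omega)).trans (burnSet_succ_left G s t')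
      · have ht : t = t' + 1 := le_antisymm h h'
        subst ht; exact subset_rfl

lemma source_mem_burnSet {V : Type*} (G : SimpleGraph V) (s : ℕ → V) (t : ℕ) :
    s t ∈ burnSet G s (t + 1) := Or.inr rfl

lemma adj_mem_burnSet {V : Type*} (G : SimpleGraph V) (s : ℕ → V) {t : ℕ} {u w : V}
    (hu : u ∈ burnSet G s t) (h : G.Adj u w) : w ∈ burnSet G s (t + 1) :=
  Or.inl (Or.inr ⟨u, hu, h⟩)

lemma grid_step {m n : ℕ} (u v : Fin m × Fin n) (h : u ≠ v) :
    ∃ w : Fin m × Fin n, (gridGraph m n).Adj u w ∧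
      Nat.dist w.1.1 v.1.1 + Nat.dist w.2.1 v.2.1 + 1
        = Nat.dist u.1.1 v.1.1 + Nat.dist u.2.1 v.2.1 := by
  by_cases h1 : u.1.1 = v.1.1
  · have h2 : u.2.1 ≠ v.2.1 := by
      intro h2; exact h (Prod.ext (Fin.ext h1) (Fin.ext h2))
    rcases Nat.lt_or_ge u.2.1 v.2.1 with hlt | hge
    · refine ⟨(u.1, ⟨u.2.1 + 1, lt_of_le_of_lt hlt v.2.2⟩), ?_, ?_⟩
      · exact boxProd_adj.mpr (Or.inr ⟨pathGraph_adj.mpr (Or.inl rfl), rfl⟩)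
      · simp [Nat.dist]; omega
    · have hlt : v.2.1 < u.2.1 := by omega
      refine ⟨(u.1, ⟨u.2.1 - 1, by omega⟩), ?_, ?_⟩
      · exact boxProd_adj.mpr (Or.inr ⟨pathGraph_adj.mpr (Or.inr (by simp; omega)), rfl⟩)
      · simp [Nat.dist]; omega
  · rcases Nat.lt_or_ge u.1.1 v.1.1 with hlt | hge
    · refine ⟨(⟨u.1.1 + 1, lt_of_le_of_lt hlt v.1.2⟩, u.2), ?_, ?_⟩
      · exact boxProd_adj.mpr (Or.inl ⟨pathGraph_adj.mpr (Or.inl rfl), rfl⟩)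
      · simp [Nat.dist]; omega
    · have hlt : v.1.1 < u.1.1 := by omega
      refine ⟨(⟨u.1.1 - 1, by omega⟩, u.2), ?_, ?_⟩
      · exact boxProd_adj.mpr (Or.inl ⟨pathGraph_adj.mpr (Or.inr (by simp; omega)), rfl⟩)
      · simp [Nat.dist]; omega

lemma burn_spread {m n : ℕ} (s : ℕ → Fin m × Fin n) :
    ∀ (d t : ℕ) (u v : Fin m × Fin n), u ∈ burnSet (gridGraph m n) s t →
      Nat.dist u.1.1 v.1.1 + Nat.dist u.2.1 v.2.1 ≤ d →
      v ∈ burnSet (gridGraph m n) s (t + d) := by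
  intro d
  induction d with
  | zero =>
      intro t u v hu hd
      have huv : u = v := by
        have h1 : Nat.dist u.1.1 v.1.1 = 0 := by omega
        have h2 : Nat.dist u.2.1 v.2.1 = 0 := by omega
        simp [Nat.dist] at h1 h2
        exact Prod.ext (Fin.ext (by omega)) (Fin.ext (by omega))
      subst huv; simpa using hu
  | succ d ih =>
      intro t u v hu hd
      by_cases huv : u = v
      · subst huv; exact burnSet_mono _ _ (by omega) hu
      · obtain ⟨w, hadj, hw⟩ := grid_step u v huv
        have hv : v ∈ burnSet (gridGraph m n) s (t + 1 + d) :=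
          ih (t + 1) w v (adj_mem_burnSet _ _ hu hadj) (by omega)
        rw [show t + (d + 1) = t + 1 + d by omega]
        exact hv

lemma exists_interval (f : ℕ → ℕ) (q y : ℕ) (h0 : f 0 = 0)
    (_hmono : ∀ a, f a ≤ f (a + 1)) (hy : y < f q) :
    ∃ a, a < q ∧ f a ≤ y ∧ y < f (a + 1) := by
  induction q with
  | zero => omega
  | succ q ih =>
      by_cases hq : y < f q
      · obtain ⟨a, ha⟩ := ih hq
        exact ⟨a, by omega, ha.2⟩
      · exact ⟨q, by omega, by omega, hy⟩

lemma sum_lin (L b : ℕ) : ∀ q : ℕ,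
    ∑ a ∈ Finset.range q, (2 * (b + a * L) + 1) = q * (2 * b + 1) + L * (q * (q - 1)) := by
  intro q
  induction q with
  | zero => simp
  | succ t ih =>
      rw [Finset.sum_range_succ, ih]
      cases t with
      | zero => simp
      | succ t' => simp only [Nat.add_sub_cancel, Nat.succ_sub_one]; ring

/-- The left endpoint (cumulative width) of the `a`-th ball assigned to a strip
with parameter `D`. -/
def offSum (L D a : ℕ) : ℕ := ∑ b ∈ Finset.range a, (2 * (D - b * L) + 1)

lemma offSum_zero (L D : ℕ) : offSum L D 0 = 0 := by simp [offSum]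

lemma offSum_succ (L D a : ℕ) :
    offSum L D (a + 1) = offSum L D a + (2 * (D - a * L) + 1) := Finset.sum_range_succ _ _

lemma offSum_eval (L D q b : ℕ) (hb : D = (q - 1) * L + b) (hq : 1 ≤ q) :
    offSum L D q = q * (2 * b + 1) + L * (q * (q - 1)) := by
  obtain ⟨p, rfl⟩ : ∃ p, q = p + 1 := ⟨q - 1, by omega⟩
  simp only [Nat.add_sub_cancel] at hb ⊢
  rw [offSum]
  have hterm : ∀ a ∈ Finset.range (p + 1), 2 * (D - a * L) + 1 = 2 * (b + (p - a) * L) + 1 := by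
    intro a ha
    simp only [Finset.mem_range] at ha
    have h1 : p * L = (p - a) * L + a * L := by
      rw [← Nat.add_mul]; congr 1; omega
    have h2 : D - a * L = b + (p - a) * L := by omega
    rw [h2]
  rw [Finset.sum_congr rfl hterm]
  have hrefl := Finset.sum_range_reflect (fun a => 2 * (b + a * L) + 1) (p + 1)
  simp only [Nat.add_sub_cancel] at hrefl
  rw [hrefl, sum_lin]
  simp

lemma offSum_ge (L k n D q b : ℕ) (hl : 1 ≤ L) (hA : L * n ≤ k * k) (hkD : k ≤ D + 1)
    (hdm : L * (q - 1) + b = D) (hbL : b < L) (hq : 1 ≤ q) :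
    n ≤ offSum L D q := by
  have hS : offSum L D q = q * (2 * b + 1) + L * (q * (q - 1)) :=
    offSum_eval L D q b (by rw [Nat.mul_comm] at hdm; omega) hq
  have e1 : L * offSum L D q = (L * q) * (D + b + 1) := by
    rw [hS, ← hdm]; ring
  have e2 : D + 1 ≤ L * q := by
    have h3 : L * q = L * (q - 1) + L := by
      rw [show q = (q - 1) + 1 by omega, Nat.mul_add, Nat.mul_one]
      simp
    omega
  have e3 : k * k ≤ (L * q) * (D + b + 1) :=
    le_trans (Nat.mul_le_mul hkD hkD) (Nat.mul_le_mul e2 (by omega))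
  have e4 : L * n ≤ L * offSum L D q := by omega
  exact Nat.le_of_mul_le_mul_left e4 (by omega)

lemma burn_empty {V : Type*} [IsEmpty V] (G : SimpleGraph V) : burn G = 0 := by
  have h : {r | ∃ s : ℕ → V, Set.univ ⊆ burnSet G s r} = ∅ := by
    ext r
    simp only [Set.mem_setOf_eq, Set.mem_empty_iff_false, iff_false]
    rintro ⟨s, -⟩
    exact IsEmpty.false (s 0)
  rw [burn, pburn, h, Nat.sInf_empty]

/-- Upper bound for fences: if `ℓ = ⌈(c/2)^(2/3)⌉` and `c√n ∈ ℕ`, then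
`b(G_{c√n, n}) ≤ 2⌈√(ℓn)⌉ + ℓ - 1`. -/
theorem burn_fence_upper (c : ℝ) (hc : 0 < c) (n m ℓ : ℕ) (hℓ1 : 1 ≤ ℓ)
    (hm : (m : ℝ) = c * Real.sqrt n)
    (hℓ : ℓ = ⌈Real.rpow (c / 2) (2 / 3)⌉₊) :
    burn (gridGraph m n) ≤ 2 * ⌈Real.sqrt (ℓ * n)⌉₊ + ℓ - 1 := by
  rcases Nat.eq_zero_or_pos m with hm0 | hm1
  · subst hm0
    rw [burn_empty]
    exact Nat.zero_le _
  rcases Nat.eq_zero_or_pos n with hn0 | hn1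
  · subst hn0
    rw [burn_empty]
    exact Nat.zero_le _
  have hl0 : 0 < ℓ := hℓ1
  set k : ℕ := ⌈Real.sqrt (ℓ * n)⌉₊ with hkdef
  -- (A) ℓ n ≤ k²
  have hsqrtk : Real.sqrt (ℓ * n) ≤ (k : ℝ) := by rw [hkdef]; exact Nat.le_ceil _
  have hA : ℓ * n ≤ k * k := by
    have h2 : ((ℓ * n : ℕ) : ℝ) ≤ (k : ℝ) * k := by
      push_cast
      calc (ℓ : ℝ) * n = Real.sqrt (ℓ * n) * Real.sqrt (ℓ * n) :=
            (Real.mul_self_sqrt (by positivity)).symm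
        _ ≤ k * k :=
            mul_le_mul hsqrtk hsqrtk (Real.sqrt_nonneg _) (Nat.cast_nonneg _)
    exact_mod_cast h2
  have hk1 : 1 ≤ k := by
    rcases Nat.eq_zero_or_pos k with h | h
    · rw [h, Nat.mul_zero] at hA
      have : ℓ * n ≥ 1 := Nat.one_le_iff_ne_zero.mpr (by positivity)
      omega
    · exact h
  -- (B) m ≤ 2 ℓ k
  have hB : m ≤ 2 * ℓ * k := by
    have hx : (c / 2) ^ ((2 : ℝ) / 3) ≤ (ℓ : ℝ) := by
      rw [hℓ]; exact Nat.le_ceil _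
    have h0 : (0 : ℝ) < c / 2 := by positivity
    have hc2 : c / 2 ≤ (ℓ : ℝ) ^ ((3 : ℝ) / 2) := by
      have e1 : ((c / 2) ^ ((2 : ℝ) / 3)) ^ ((3 : ℝ) / 2) = c / 2 := by
        rw [← Real.rpow_mul h0.le]
        norm_num
      calc c / 2 = ((c / 2) ^ ((2 : ℝ) / 3)) ^ ((3 : ℝ) / 2) := e1.symm
        _ ≤ (ℓ : ℝ) ^ ((3 : ℝ) / 2) :=
            Real.rpow_le_rpow (Real.rpow_nonneg h0.le _) hx (by norm_num)
    have hsplit : (ℓ : ℝ) ^ ((3 : ℝ) / 2) = (ℓ : ℝ) * Real.sqrt ℓ := by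
      have hl0' : (0 : ℝ) < (ℓ : ℝ) := by exact_mod_cast hl0
      rw [show (3 : ℝ) / 2 = 1 + 1 / 2 by norm_num, Real.rpow_add hl0', Real.rpow_one,
        ← Real.sqrt_eq_rpow]
    have hmle : (m : ℝ) ≤ 2 * ℓ * k := by
      have h3 : Real.sqrt ((ℓ : ℝ) * n) = Real.sqrt ℓ * Real.sqrt n :=
        Real.sqrt_mul (Nat.cast_nonneg _) _
      calc (m : ℝ) = c * Real.sqrt n := hm
        _ ≤ (2 * ((ℓ : ℝ) * Real.sqrt ℓ)) * Real.sqrt n := by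
            apply mul_le_mul_of_nonneg_right _ (Real.sqrt_nonneg _)
            rw [← hsplit]; linarith
        _ = 2 * (ℓ : ℝ) * Real.sqrt ((ℓ : ℝ) * n) := by rw [h3]; ring
        _ ≤ 2 * ℓ * k := by
            apply mul_le_mul_of_nonneg_left hsqrtk (by positivity)
    exact_mod_cast hmle
  -- strip height H
  have hdm := Nat.div_add_mod (m + ℓ - 1) ℓ
  have hmod : (m + ℓ - 1) % ℓ < ℓ := Nat.mod_lt _ hl0
  set H : ℕ := (m + ℓ - 1) / ℓ with hHdef
  have hmlH : m ≤ ℓ * H := by omega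
  have hH1 : 1 ≤ H := by
    rcases Nat.eq_zero_or_pos H with h | h
    · rw [h, Nat.mul_zero] at hdm; omega
    · exact h
  have hH2 : H ≤ 2 * k := by
    have hb2 : 2 * ℓ * k = ℓ * (2 * k) := by ring
    have h2 : H ≤ (ℓ * (2 * k) + (ℓ - 1)) / ℓ := by
      rw [hHdef]; exact Nat.div_le_div_right (by omega)
    rw [Nat.mul_add_div hl0, Nat.div_eq_of_lt (by omega)] at h2
    omega
  -- the strategy
  have hltm : ∀ z : ℕ, min z (m - 1) < m :=
    fun z => lt_of_le_of_lt (min_le_right _ _) (by omega)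
  have hltn : ∀ z : ℕ, min z (n - 1) < n :=
    fun z => lt_of_le_of_lt (min_le_right _ _) (by omega)
  set s : ℕ → Fin m × Fin n := fun i =>
    (⟨min (H * (i % ℓ) + (H - 1) / 2) (m - 1), hltm _⟩,
     ⟨min (offSum ℓ (k + ℓ - 2 - i % ℓ) (i / ℓ) + (k + ℓ - 2 - i % ℓ - i / ℓ * ℓ)) (n - 1),
       hltn _⟩) with hs
  have hcov : Set.univ ⊆ burnSet (gridGraph m n) s (2 * k + ℓ - 1) := by
    rintro ⟨x, y⟩ -
    have hx1 : x.1 < m := x.2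
    have hy1 : y.1 < n := y.2
    -- the strip of x
    have hxdm := Nat.div_add_mod x.1 H
    have hxmod : x.1 % H < H := Nat.mod_lt _ hH1
    set j : ℕ := x.1 / H with hj
    have hjl : j < ℓ := by
      rw [hj]
      exact (Nat.div_lt_iff_lt_mul hH1).mpr (by omega)
    set D : ℕ := k + ℓ - 2 - j with hD
    have hDj : D + j = k + ℓ - 2 := by omega
    have hkD : k ≤ D + 1 := by omega
    have hddm := Nat.div_add_mod D ℓ
    have hdmod : D % ℓ < ℓ := Nat.mod_lt _ hl0
    -- the ball of y within the strip
    have hb' : ℓ * (D / ℓ + 1 - 1) + D % ℓ = D := by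
      simp only [Nat.add_sub_cancel]; omega
    have hnoff : n ≤ offSum ℓ D (D / ℓ + 1) :=
      offSum_ge ℓ k n D (D / ℓ + 1) (D % ℓ) hl0 hA hkD hb' hdmod (Nat.le_add_left _ _)
    obtain ⟨a, haq, hy2, hy3⟩ := exists_interval (offSum ℓ D) (D / ℓ + 1) y.1
      (offSum_zero ℓ D) (fun a => by rw [offSum_succ]; omega) (by omega)
    rw [offSum_succ] at hy3
    have hal : a * ℓ ≤ D := by
      have h1 : a ≤ D / ℓ := by omega
      calc a * ℓ ≤ D / ℓ * ℓ := Nat.mul_le_mul_right _ h1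
        _ ≤ D := by rw [Nat.mul_comm]; omega
    -- the source index
    have hil : (ℓ * a + j) % ℓ = j := by rw [Nat.mul_add_mod, Nat.mod_eq_of_lt hjl]
    have hid : (ℓ * a + j) / ℓ = a := by
      rw [Nat.mul_add_div hl0, Nat.div_eq_of_lt hjl, Nat.add_zero]
    have hcm : ℓ * a = a * ℓ := Nat.mul_comm _ _
    have hiT : ℓ * a + j ≤ k + ℓ - 2 := by omega
    have hs1 : (s (ℓ * a + j)).1.1 = min (H * j + (H - 1) / 2) (m - 1) := by
      simp only [hs, hil]
    have hs2 : (s (ℓ * a + j)).2.1 = min (offSum ℓ D a + (D - a * ℓ)) (n - 1) := by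
      simp only [hs, hil, hid, hD]
    -- the distances
    have hvert : Nat.dist (s (ℓ * a + j)).1.1 x.1 ≤ k := by
      rw [hs1]; simp only [Nat.dist]; omega
    have hhor : Nat.dist (s (ℓ * a + j)).2.1 y.1 ≤ D - a * ℓ := by
      rw [hs2]; simp only [Nat.dist]; omega
    -- burn
    have hfin := burn_spread s (k + (D - a * ℓ)) (ℓ * a + j + 1) (s (ℓ * a + j)) ⟨x, y⟩
      (source_mem_burnSet _ _ _)
      (show Nat.dist (s (ℓ * a + j)).1.1 x.1 + Nat.dist (s (ℓ * a + j)).2.1 y.1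
          ≤ k + (D - a * ℓ) by omega)
    refine burnSet_mono _ _ ?_ hfin
    omega
  exact Nat.sInf_le ⟨s, hcov⟩
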